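/- Let A be an l×l integer matrix whose Smith normal form is diag(d₁,…,d_l), and let M be an abelian group (written multiplicatively) such that the map x ↦ x^{d_i} is surjective on M for each i. Then for every a ∈ M^l the system ∏_j T_j^{A_{ji}} = a_i (i = 1,…,l) has a solution T ∈ M^l. -/

import Mathlib

private lemma zpow_finsum {M : Type*} [CommGroup M] {ι : Type*} (x : M)
    (s : Finset ι) (f : ι → ℤ) : x ^ (∑ j ∈ s, f j) = ∏ j ∈ s, x ^ f j := by
  induction s using Finset.cons_induction with
  | empty => simp
  | cons a s ha ih => simp [Finset.sum_cons, Finset.prod_cons, zpow_add, ih]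

private def phiM {M : Type*} [CommGroup M] {l : ℕ} (B : Matrix (Fin l) (Fin l) ℤ)
    (T : Fin l → M) : Fin l → M := fun i => ∏ j, T j ^ B j i

private lemma phiM_mul {M : Type*} [CommGroup M] {l : ℕ} (B C : Matrix (Fin l) (Fin l) ℤ)
    (T : Fin l → M) : phiM (B * C) T = phiM C (phiM B T) := by
  funext i
  simp only [phiM, Matrix.mul_apply, zpow_finsum, zpow_mul, ← Finset.prod_zpow]
  exact Finset.prod_comm

private lemma phiM_one {M : Type*} [CommGroup M] {l : ℕ} (T : Fin l → M) :
    phiM (1 : Matrix (Fin l) (Fin l) ℤ) T = T := by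
  funext i
  simp [phiM, Matrix.one_apply, apply_ite]

/-- If the Smith normal form of an `l×l` integer matrix `A` is `diag(d₁,…,d_l)` and the
`dᵢ`-th power maps are surjective on an abelian group `M`, then for every `a ∈ M^l` the
system `∏_j T_j^{A_{ji}} = a_i` has a solution `T ∈ M^l`. -/
theorem snf_system_solvable (M : Type*) [CommGroup M] (l : ℕ)
    (A : Matrix (Fin l) (Fin l) ℤ) (d : Fin l → ℤ)
    (U V : Matrix (Fin l) (Fin l) ℤ) (hU : IsUnit U.det) (hV : IsUnit V.det)
    (hSNF : U * A * V = Matrix.diagonal d)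
    (hsurj : ∀ i : Fin l, ∀ a : M, ∃ b : M, b ^ d i = a)
    (a : Fin l → M) :
    ∃ T : Fin l → M, ∀ i : Fin l, (∏ j : Fin l, T j ^ A j i) = a i := by
  -- choose s with s i ^ d i = (phiM V a) i
  choose s hs using fun i => hsurj i (phiM V a i)
  refine ⟨phiM U s, fun i => ?_⟩
  have hdiag : phiM (Matrix.diagonal d) s = phiM V a := by
    funext i
    simp only [phiM]
    rw [Finset.prod_eq_single i (fun j _ hj => by
      simp [Matrix.diagonal_apply_ne _ hj]) (by simp)]
    simpa [Matrix.diagonal_apply_eq, phiM] using hs i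
  have key : phiM V (phiM A (phiM U s)) = phiM V a := by
    rw [← phiM_mul, ← phiM_mul, ← mul_assoc, hSNF, hdiag]
  have hVinv : V * V⁻¹ = 1 := Matrix.mul_nonsing_inv V hV
  have : phiM V⁻¹ (phiM V (phiM A (phiM U s))) = phiM V⁻¹ (phiM V a) := by rw [key]
  rw [← phiM_mul V V⁻¹, hVinv, phiM_one] at this
  rw [← phiM_mul V V⁻¹, hVinv, phiM_one] at this
  calc (∏ j : Fin l, phiM U s j ^ A j i) = phiM A (phiM U s) i := rfl
    _ = a i := by rw [this]
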